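/- Let p be a prime and n ≥ 1 an integer. Then the Newton polynomial N_{pn} satisfies N_{pn}(t_1, …, t_{pn}) ≡ N_n(t_1, …, t_n)^p modulo p in ℤ[t_1, …, t_{pn}]; equivalently, the images of N_{pn}(t_1, …, t_{pn}) and of N_n(t_1, …, t_n)^p in the polynomial ring (ℤ/p)[t_1, …, t_{pn}] coincide. -/

import Mathlib

open MvPolynomial

/-- The Newton polynomials `N_n ∈ R[t_1, …, t_n]`, defined recursively by
`N_1(t) = t_1` and
`N_n(t) = t_1 N_{n−1}(t) − t_2 N_{n−2}(t) + ⋯ + (−1)^{n−2} t_{n−1} N_1(t) + (−1)^{n−1} n t_n`.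
The variable `t_m` is `X m`. -/
noncomputable def newton (R : Type*) [CommRing R] : ℕ → MvPolynomial ℕ R
  | 0 => 0
  | (n+1) =>
      (∑ i ∈ Finset.range n, (-1 : MvPolynomial ℕ R)^i * X (i+1) * newton R (n - i))
      + (-1 : MvPolynomial ℕ R)^n * ((n+1 : ℕ) : MvPolynomial ℕ R) * X (n+1)
  decreasing_by exact Nat.lt_succ_of_le (Nat.sub_le n i)

open Finset in
lemma newton_succ (R : Type*) [CommRing R] (n : ℕ) : newton R (n+1) =
      (∑ i ∈ Finset.range n, (-1 : MvPolynomial ℕ R)^i * X (i+1) * newton R (n - i))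
      + (-1 : MvPolynomial ℕ R)^n * ((n+1 : ℕ) : MvPolynomial ℕ R) * X (n+1) := by
  rw [newton]

lemma sum_filter_antidiag {M : Type*} [AddCommMonoid M] (k : ℕ) (F : ℕ → ℕ → M) :
    ∑ a ∈ Finset.HasAntidiagonal.antidiagonal (k+1) with a.1 < k+1, F a.1 a.2
      = ∑ j ∈ Finset.range (k+1), F j (k+1-j) := by
  refine Finset.sum_nbij' (fun a => a.1) (fun j => (j, k+1-j)) ?_ ?_ ?_ ?_ ?_
  · intro a ha
    simp only [Finset.mem_filter, Finset.HasAntidiagonal.mem_antidiagonal] at ha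
    simpa [Finset.mem_range] using ha.2
  · intro j hj
    simp only [Finset.mem_range] at hj
    simp only [Finset.mem_filter, Finset.HasAntidiagonal.mem_antidiagonal]
    omega
  · intro a ha
    simp only [Finset.mem_filter, Finset.HasAntidiagonal.mem_antidiagonal] at ha
    ext <;> simp <;> omega
  · intro j hj; rfl
  · intro a ha
    simp only [Finset.mem_filter, Finset.HasAntidiagonal.mem_antidiagonal] at ha
    obtain ⟨x, y⟩ := a
    simp only [Finset.HasAntidiagonal.mem_antidiagonal] at *
    congr 1
    omega

lemma aeval_newton {σ : Type*} [Fintype σ] [DecidableEq σ] {R : Type*} [CommRing R]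
    (f : ℕ → MvPolynomial σ R) (m : ℕ) (hf : ∀ i, 1 ≤ i → i ≤ m → f i = esymm σ R i) :
    ∀ k, 0 < k → k ≤ m → aeval f (newton R k) = psum σ R k := by
  intro k
  induction k using Nat.strong_induction_on with
  | _ k ih =>
    match k with
    | 0 => intro h; exact absurd h (lt_irrefl 0)
    | (n+1) =>
      intro _ hkm
      rw [newton_succ]
      simp only [map_add, map_sum, map_mul, map_pow, map_neg, map_one, map_natCast, aeval_X]
      have hstep : ∀ i ∈ Finset.range n,
          (-1 : MvPolynomial σ R)^i * f (i+1) * aeval f (newton R (n - i))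
            = (-1 : MvPolynomial σ R)^i * esymm σ R (i+1) * psum σ R (n - i) := by
        intro i hi
        rw [Finset.mem_range] at hi
        rw [hf (i+1) (Nat.le_add_left 1 i) (by omega),
          ih (n - i) (by omega) (by omega) (by omega)]
      rw [Finset.sum_congr rfl hstep, hf (n+1) (by omega) hkm]
      -- Newton's identity
      have h := mul_esymm_eq_sum σ R (n+1)
      rw [sum_filter_antidiag n
        (fun a b => (-1 : MvPolynomial σ R)^a * esymm σ R a * psum σ R b)] at h
      rw [Finset.sum_range_succ'] at h
      simp only [esymm_zero, pow_zero, one_mul, mul_one, Nat.sub_zero] at h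
      have hsum : ∀ i ∈ Finset.range n,
          (-1 : MvPolynomial σ R)^(i+1) * esymm σ R (i+1) * psum σ R (n+1-(i+1))
            = -((-1 : MvPolynomial σ R)^i * esymm σ R (i+1) * psum σ R (n-i)) := by
        intro i hi
        have : n + 1 - (i+1) = n - i := by omega
        rw [this, pow_succ]
        ring
      rw [Finset.sum_congr rfl hsum, Finset.sum_neg_distrib] at h
      rw [show n + 1 + 1 = n + 2 from rfl, pow_succ, pow_succ] at h
      rw [show ((-1 : MvPolynomial σ R) ^ n * -1 * -1) = (-1)^n by ring] at h
      have key : ((-1 : MvPolynomial σ R)^n) * ((-1)^n) = 1 := by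
        rw [← pow_add]; exact Even.neg_one_pow ⟨n, rfl⟩
      linear_combination ((-1 : MvPolynomial σ R)^n) * h +
        (psum σ R (n+1) - ∑ x ∈ Finset.range n,
          (-1 : MvPolynomial σ R)^x * esymm σ R (x+1) * psum σ R (n-x)) * key

lemma newton_map {R S : Type*} [CommRing R] [CommRing S] (f : R →+* S) :
    ∀ k, MvPolynomial.map f (newton R k) = newton S k := by
  intro k
  induction k using Nat.strong_induction_on with
  | _ k ih =>
    match k with
    | 0 => simp [newton]
    | (n+1) =>
      rw [newton_succ, newton_succ]
      simp only [map_add, map_sum, map_mul, map_pow, map_neg, map_one, map_natCast,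
        MvPolynomial.map_X]
      congr 1
      refine Finset.sum_congr rfl fun i hi => ?_
      rw [ih (n - i) (Nat.lt_succ_of_le (Nat.sub_le n i))]

lemma rename_newton {R : Type*} [CommRing R] (w : ℕ → ℕ) (m : ℕ)
    (hw : ∀ i, 1 ≤ i → i ≤ m → w i = i) :
    ∀ k, k ≤ m → rename w (newton R k) = newton R k := by
  intro k
  induction k using Nat.strong_induction_on with
  | _ k ih =>
    match k with
    | 0 => intro _; simp [newton]
    | (n+1) =>
      intro hkm
      rw [newton_succ]
      simp only [map_add, map_sum, map_mul, map_pow, map_neg, map_one, map_natCast, rename_X]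
      congr 1
      · refine Finset.sum_congr rfl fun i hi => ?_
        rw [Finset.mem_range] at hi
        rw [hw (i+1) (by omega) (by omega), ih (n-i) (by omega) (by omega)]
      · rw [hw (n+1) (by omega) hkm]

/-- For a prime `p` and `n ≥ 1`, `N_{pn} ≡ N_n^p (mod p)`, i.e. the images of
`N_{pn}(t_1,…,t_{pn})` and `N_n(t_1,…,t_n)^p` in `(ℤ/p)[t_1,t_2,…]` coincide. -/
theorem newton_pn_congr_pow_p (p : ℕ) (hp : p.Prime) (n : ℕ) (hn : 1 ≤ n) :
    MvPolynomial.map (Int.castRingHom (ZMod p)) (newton ℤ (p * n)) =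
      MvPolynomial.map (Int.castRingHom (ZMod p)) ((newton ℤ n) ^ p) := by
  haveI : Fact p.Prime := ⟨hp⟩
  set R := ZMod p
  rw [newton_map, map_pow, newton_map]
  set m := p * n with hmdef
  have hnm : n ≤ m := Nat.le_mul_of_pos_left n hp.pos
  have hm1 : 0 < m := lt_of_lt_of_le hn hnm
  show newton R m = newton R n ^ p
  let u : ℕ → Fin m := fun i => if h : i - 1 < m then ⟨i-1, h⟩ else ⟨0, hm1⟩
  let g : Fin m → MvPolynomial (Fin m) R := fun j => esymm (Fin m) R ((j:ℕ)+1)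
  have hgu : ∀ i, 1 ≤ i → i ≤ m → g (u i) = esymm (Fin m) R i := by
    intro i h1 h2
    have h3 : i - 1 < m := by omega
    simp only [u, g, dif_pos h3]
    congr 1
    omega
  have hev : ∀ k, 0 < k → k ≤ m → aeval g (rename u (newton R k)) = psum (Fin m) R k := by
    intro k hk hkm
    rw [aeval_rename]
    exact aeval_newton (g ∘ u) m (fun i h1 h2 => hgu i h1 h2) k hk hkm
  have hpsum : psum (Fin m) R m = (psum (Fin m) R n) ^ p := by
    simp only [psum]
    rw [sum_pow_char]
    exact Finset.sum_congr rfl fun i _ => by rw [← pow_mul, mul_comm]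
  have hinj : Function.Injective (⇑(aeval g) : MvPolynomial (Fin m) R → MvPolynomial (Fin m) R) := by
    intro a b hab
    apply esymmAlgHom_fin_injective R (le_refl m)
    apply Subtype.val_injective
    rw [esymmAlgHom_apply, esymmAlgHom_apply]
    exact hab
  have e1 : rename u (newton R m) = rename u (newton R n ^ p) := by
    apply hinj
    rw [map_pow, map_pow, hev m hm1 le_rfl, hev n hn hnm, hpsum]
  let w : ℕ → ℕ := (fun j : Fin m => (j:ℕ)+1) ∘ u
  have hw : ∀ i, 1 ≤ i → i ≤ m → w i = i := by
    intro i h1 h2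
    have h3 : i - 1 < m := by omega
    simp only [w, Function.comp, u, dif_pos h3]
    omega
  have e2 := congrArg (rename (fun j : Fin m => (j:ℕ)+1)) e1
  rw [rename_rename, rename_rename, map_pow,
    rename_newton w m hw m le_rfl, rename_newton w m hw n hnm] at e2
  exact e2
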